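/- arXiv:math/0607433 — 2 statements merged into one kernel-verified Lean document; each statement's English description precedes it below -/
import Mathlib

section
/- Assume the setting and hypothesis (A). Then minimal domains exist, and every s-invariant domain contains a minimal one: for every s-invariant domain D there exists a minimal domain ℳ with ℳ ⪯ D. -/
open MeasureTheory Metric Set Filter Topology

noncomputable section

/-- The parameter space `T`: the closed `ε`-ball around `a` in `ℝⁿ`. -/
abbrev PSpace (n : ℕ) (a : EuclideanSpace ℝ (Fin n)) (ε : ℝ) : Type _ :=
  ↥(Metric.closedBall a ε)

/-- Perturbed iterates: `pIter f k z t = f_{t_k} ∘ ⋯ ∘ f_{t_1} (z)`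
(the sequence `t` is indexed from `0` here). -/
def pIter {M T : Type*} (f : M → T → M) : ℕ → M → (ℕ → T) → M
  | 0, z, _ => z
  | k + 1, z, t => f (pIter f k z t) (t k)

/-- An s-invariant domain for the randomly perturbed system: a finite tuple of
nonempty open sets with pairwise disjoint closures, permuted cyclically by all
perturbed iterates. -/
structure SInvDomain {M T : Type*} [TopologicalSpace M] (f : M → T → M) where
  r : ℕ
  r_pos : 0 < r
  U : Fin r → Set M
  isOpen : ∀ i, IsOpen (U i)
  nonempty : ∀ i, (U i).Nonempty
  separated : ∀ i j : Fin r, i ≠ j → closure (U i) ∩ closure (U j) = ∅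
  invariant : ∀ k : ℕ, 1 ≤ k → ∀ i : Fin r, ∀ z ∈ U i, ∀ t : ℕ → T,
    pIter f k z t ∈ U ⟨((i : ℕ) + k) % r, Nat.mod_lt _ r_pos⟩

/-- The union `⋃D` of the open sets forming an s-invariant domain. -/
def SInvDomain.carrier {M T : Type*} [TopologicalSpace M] {f : M → T → M}
    (D : SInvDomain f) : Set M := ⋃ i, D.U i

/-- The partial order `D ⪯ D'` on s-invariant domains. -/
def DomLE {M T : Type*} [TopologicalSpace M] {f : M → T → M}
    (D D' : SInvDomain f) : Prop :=
  ∃ i i' : ℕ, ∀ k : ℕ, 1 ≤ k →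
    D.U ⟨(i + k) % D.r, Nat.mod_lt _ D.r_pos⟩ ⊆ D'.U ⟨(i' + k) % D'.r, Nat.mod_lt _ D'.r_pos⟩

/-- Two s-invariant domains coincide up to cyclic shift. -/
def CyclicEq {M T : Type*} [TopologicalSpace M] {f : M → T → M}
    (D D' : SInvDomain f) : Prop :=
  ∃ i i' : ℕ, ∀ k : ℕ, 1 ≤ k →
    D.U ⟨(i + k) % D.r, Nat.mod_lt _ D.r_pos⟩ = D'.U ⟨(i' + k) % D'.r, Nat.mod_lt _ D'.r_pos⟩

/-- A minimal invariant domain. -/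
def MinimalDom {M T : Type*} [TopologicalSpace M] {f : M → T → M}
    (D : SInvDomain f) : Prop :=
  ∀ D' : SInvDomain f, DomLE D' D → CyclicEq D' D

/-- A c-invariant (completely invariant) set. -/
def CInvariant {M T : Type*} (f : M → T → M) (C : Set M) : Prop :=
  ∀ x ∈ C, ∀ t : ℕ → T, ∀ k : ℕ, 1 ≤ k → pIter f k x t ∈ C

/-- The ω-limit of a point under a fixed perturbation vector. -/
def omegaPt {M T : Type*} [TopologicalSpace M] (f : M → T → M) (z : M) (t : ℕ → T) : Set M :=
  {w | ∃ nseq : ℕ → ℕ, StrictMono nseq ∧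
    Tendsto (fun j => pIter f (nseq j) z t) atTop (𝓝 w)}

/-- The ω-limit of a set under a fixed perturbation vector. -/
def omegaSet {M T : Type*} [TopologicalSpace M] (f : M → T → M) (U : Set M) (t : ℕ → T) :
    Set M :=
  {w | ∃ (u : ℕ → M) (nseq : ℕ → ℕ), (∀ j, u j ∈ U) ∧ StrictMono nseq ∧
    Tendsto (fun j => pIter f (nseq j) (u j) t) atTop (𝓝 w)}

/-- The ω-limit of a set under all perturbation vectors. -/
def omegaSetAll {M T : Type*} [TopologicalSpace M] (f : M → T → M) (U : Set M) : Set M :=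
  {w | ∃ (u : ℕ → M) (ts : ℕ → ℕ → T) (nseq : ℕ → ℕ), (∀ j, u j ∈ U) ∧ StrictMono nseq ∧
    Tendsto (fun j => pIter f (nseq j) (u j) (ts j)) atTop (𝓝 w)}

/-- A stationary probability measure for the perturbed system. -/
def Stationary {M T : Type*} [TopologicalSpace M] [MeasurableSpace M] [MeasurableSpace T]
    (f : M → T → M) (ν : Measure T) (μ : Measure M) : Prop :=
  ∀ φ : C(M, ℝ), ∫ z, (∫ t, φ (f z t) ∂ν) ∂μ = ∫ z, φ z ∂μ

/-- The skew product map `S(z,t) = (f_{t₁}(z), σ t)`. -/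
def skewProd {M T : Type*} (f : M → T → M) : M × (ℕ → T) → M × (ℕ → T) :=
  fun p => (f p.1 (p.2 0), fun i => p.2 (i + 1))

/-- The support of a measure: points all of whose open neighbourhoods have
positive measure. -/
def msupport {M : Type*} [TopologicalSpace M] [MeasurableSpace M] (μ : Measure M) : Set M :=
  {x | ∀ O : Set M, IsOpen O → x ∈ O → 0 < μ O}

/-- The ergodic basin `E(μ)` of a stationary measure: points whose time averages along
`ν^∞`-a.e. perturbed orbit converge to the space average of every continuous function. -/
def basin {M T : Type*} [TopologicalSpace M] [MeasurableSpace M] [MeasurableSpace T]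
    (f : M → T → M) (νinf : Measure (ℕ → T)) (μ : Measure M) : Set M :=
  {x | ∀ᵐ t ∂νinf, ∀ φ : C(M, ℝ),
    Tendsto (fun nn : ℕ => (nn : ℝ)⁻¹ * ∑ j ∈ Finset.range nn, φ (pIter f j x t))
      atTop (𝓝 (∫ z, φ z ∂μ))}

/-! ### Auxiliary machinery for Statement 8 -/

section Aux8

set_option linter.unusedSectionVars false
set_option linter.unusedVariables false

variable {M : Type*} [MetricSpace M] [CompactSpace M] {T : Type*} [TopologicalSpace T] {f : M → T → M}

lemma pIter_succ' (f : M → T → M) (k : ℕ) (z : M) (t : ℕ → T) :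
    pIter f (k + 1) z t = f (pIter f k z t) (t k) := rfl

lemma pIter_continuous (hfc : Continuous fun p : M × T => f p.1 p.2) (k : ℕ) (t : ℕ → T) :
    Continuous fun z : M => pIter f k z t := by
  induction k with
  | zero => exact continuous_id
  | succ k ih =>
    show Continuous fun z : M => f (pIter f k z t) (t k)
    exact hfc.comp (ih.prodMk continuous_const)

lemma pIter_isOpenMap (hfh : ∀ t : T, IsHomeomorph fun z : M => f z t) (k : ℕ) (t : ℕ → T) :
    IsOpenMap fun z : M => pIter f k z t := by
  induction k with
  | zero => exact IsOpenMap.id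
  | succ k ih =>
    show IsOpenMap fun z : M => f (pIter f k z t) (t k)
    exact ((hfh (t k)).isOpenMap).comp ih

lemma pIter_add (k l : ℕ) (z : M) (t : ℕ → T) :
    pIter f (l + k) z t = pIter f k (pIter f l z t) fun i => t (i + l) := by
  induction k with
  | zero => rfl
  | succ k ih =>
    show f (pIter f (l + k) z t) (t (l + k)) = f (pIter f k (pIter f l z t) fun i => t (i + l)) (t (k + l))
    rw [ih, Nat.add_comm l k]

lemma pIter_congr {l : ℕ} {z : M} {t s : ℕ → T} (h : ∀ i < l, t i = s i) :
    pIter f l z t = pIter f l z s := by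
  induction l with
  | zero => rfl
  | succ l ih =>
    show f (pIter f l z t) (t l) = f (pIter f l z s) (s l)
    rw [ih fun i hi => h i (Nat.lt_succ_of_lt hi), h l (Nat.lt_succ_self l)]

lemma pIter_pIter (k l : ℕ) (z : M) (t t' : ℕ → T) :
    pIter f k (pIter f l z t) t' =
      pIter f (l + k) z fun i => if i < l then t i else t' (i - l) := by
  have h1 : pIter f l z (fun i => if i < l then t i else t' (i - l)) = pIter f l z t :=
    pIter_congr fun i hi => (if_pos hi)
  have h2 : (fun i => (fun j => if j < l then t j else t' (j - l)) (i + l)) = t' := by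
    funext i
    simp only [if_neg (by omega : ¬ i + l < l), Nat.add_sub_cancel]
  rw [pIter_add, h1, h2]

/-- Arithmetic helper: `x + (r - x % r)` acts as "subtract `x`" modulo `r`. -/
lemma mod_cancel8 {r : ℕ} (hr : 0 < r) (x y : ℕ) : (x + (r - x % r) + y) % r = y % r := by
  have h2 := Nat.div_add_mod x r
  have h3 : x % r < r := Nat.mod_lt _ hr
  have h1 : x + (r - x % r) + y = r * (x / r + 1) + y := by
    have h4 : r * (x / r + 1) = r * (x / r) + r := by ring
    omega
  rw [h1, Nat.mul_add_mod]

lemma mod_add_cong8 {r a b : ℕ} (h : a % r = b % r) (k : ℕ) : (a + k) % r = (b + k) % r := by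
  rw [Nat.add_mod a k, h, ← Nat.add_mod]

lemma mod_cong_add8 {r a b : ℕ} (h : a % r = b % r) (X : ℕ) : (X + a) % r = (X + b) % r := by
  rw [Nat.add_mod X a, h, ← Nat.add_mod]

/-- The sets of an s-invariant domain indexed by arbitrary naturals (reduced mod `r`). -/
def SInvDomain.Uc {M T : Type*} [TopologicalSpace M] {f : M → T → M}
    (D : SInvDomain f) (k : ℕ) : Set M :=
  D.U ⟨k % D.r, Nat.mod_lt _ D.r_pos⟩

lemma Uc_congr (D : SInvDomain f) {x y : ℕ} (h : x % D.r = y % D.r) : D.Uc x = D.Uc y := by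
  unfold SInvDomain.Uc
  exact congrArg D.U (Fin.ext h)

lemma Uc_nonempty (D : SInvDomain f) (k : ℕ) : (D.Uc k).Nonempty := D.nonempty _

lemma Uc_inv (D : SInvDomain f) {i k : ℕ} (hk : 1 ≤ k) {z : M} (hz : z ∈ D.Uc i)
    (t : ℕ → T) : pIter f k z t ∈ D.Uc (i + k) := by
  have h : pIter f k z t ∈ D.Uc (i % D.r + k) :=
    D.invariant k hk ⟨i % D.r, Nat.mod_lt _ D.r_pos⟩ z hz t
  rwa [Uc_congr D (Nat.mod_add_mod i D.r k)] at h

lemma Uc_index_eq (D : SInvDomain f) {i j : ℕ} {S : Set M} (hS : S.Nonempty)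
    (h1 : S ⊆ D.Uc i) (h2 : S ⊆ D.Uc j) : i % D.r = j % D.r := by
  by_contra hne
  have hfin : (⟨i % D.r, Nat.mod_lt _ D.r_pos⟩ : Fin D.r) ≠ ⟨j % D.r, Nat.mod_lt _ D.r_pos⟩ :=
    fun h => hne (congrArg Fin.val h)
  obtain ⟨x, hx⟩ := hS
  have hmem : x ∈ closure (D.U ⟨i % D.r, Nat.mod_lt _ D.r_pos⟩) ∩
      closure (D.U ⟨j % D.r, Nat.mod_lt _ D.r_pos⟩) :=
    ⟨subset_closure (h1 hx), subset_closure (h2 hx)⟩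
  rw [D.separated _ _ hfin] at hmem
  exact hmem

/-- Data extracted from a `DomLE` relation. -/
noncomputable def DomLE.i {M T : Type*} [TopologicalSpace M] {f : M → T → M}
    {D D' : SInvDomain f} (h : DomLE D D') : ℕ := h.choose

noncomputable def DomLE.i' {M T : Type*} [TopologicalSpace M] {f : M → T → M}
    {D D' : SInvDomain f} (h : DomLE D D') : ℕ := h.choose_spec.choose

lemma DomLE.spec {M T : Type*} [TopologicalSpace M] {f : M → T → M}
    {D D' : SInvDomain f} (h : DomLE D D') :
    ∀ k : ℕ, 1 ≤ k → D.Uc (h.i + k) ⊆ D'.Uc (h.i' + k) :=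
  h.choose_spec.choose_spec

lemma domle_refl (D : SInvDomain f) : DomLE D D :=
  ⟨0, 0, fun _ _ => subset_rfl⟩

lemma domle_trans {D₁ D₂ D₃ : SInvDomain f} (h12 : DomLE D₁ D₂) (h23 : DomLE D₂ D₃) :
    DomLE D₁ D₃ := by
  set c := h12.i' + (D₂.r - h23.i % D₂.r) with hc
  refine ⟨h12.i, h23.i' + c, fun k hk => ?_⟩
  show D₁.Uc (h12.i + k) ⊆ D₃.Uc (h23.i' + c + k)
  have e1 : D₂.Uc (h12.i' + k) = D₂.Uc (h23.i + (k + c)) := by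
    apply Uc_congr
    have h3 := mod_cancel8 D₂.r_pos h23.i (h12.i' + k)
    have he : h23.i + (k + c) = h23.i + (D₂.r - h23.i % D₂.r) + (h12.i' + k) := by omega
    rw [he, h3]
  have e2 : D₃.Uc (h23.i' + (k + c)) = D₃.Uc (h23.i' + c + k) :=
    Uc_congr _ (by rw [show h23.i' + (k + c) = h23.i' + c + k by omega])
  intro x hx
  have hx1 := h12.spec k hk hx
  rw [e1] at hx1
  have hx2 := h23.spec (k + c) (by omega) hx1
  rwa [e2] at hx2

lemma domle_dvd {D₂ D₁ : SInvDomain f} (h : DomLE D₂ D₁) : D₁.r ∣ D₂.r := by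
  have s1 := h.spec 1 le_rfl
  have s2 := h.spec (1 + D₂.r) (by omega)
  have e : D₂.Uc (h.i + 1) = D₂.Uc (h.i + (1 + D₂.r)) :=
    Uc_congr _ (by rw [show h.i + (1 + D₂.r) = (h.i + 1) + D₂.r by omega, Nat.add_mod_right])
  have hidx : (h.i' + 1) % D₁.r = (h.i' + (1 + D₂.r)) % D₁.r :=
    Uc_index_eq D₁ (Uc_nonempty D₂ (h.i + 1)) s1 (fun x hx => s2 (e ▸ hx))
  have hmod : (h.i' + 1) ≡ (h.i' + 1 + D₂.r) [MOD D₁.r] := by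
    unfold Nat.ModEq
    rw [hidx, show h.i' + (1 + D₂.r) = h.i' + 1 + D₂.r by omega]
  have := (Nat.modEq_iff_dvd' (by omega)).1 hmod
  simpa using this

lemma domle_antisymm {D₁ D₂ : SInvDomain f} (h12 : DomLE D₁ D₂) (h21 : DomLE D₂ D₁) :
    CyclicEq D₁ D₂ := by
  refine ⟨h12.i, h12.i', fun k hk => ?_⟩
  show D₁.Uc (h12.i + k) = D₂.Uc (h12.i' + k)
  set c := h12.i' + (D₂.r - h21.i % D₂.r) with hc
  have e1 : D₂.Uc (h12.i' + k) = D₂.Uc (h21.i + (k + c)) := by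
    apply Uc_congr
    have h3 := mod_cancel8 D₂.r_pos h21.i (h12.i' + k)
    have he : h21.i + (k + c) = h21.i + (D₂.r - h21.i % D₂.r) + (h12.i' + k) := by omega
    rw [he, h3]
  have sub2 : D₂.Uc (h21.i + (k + c)) ⊆ D₁.Uc (h21.i' + (k + c)) := h21.spec (k + c) (by omega)
  have hidx : (h12.i + k) % D₁.r = (h21.i' + (k + c)) % D₁.r :=
    Uc_index_eq D₁ (Uc_nonempty D₁ (h12.i + k)) subset_rfl
      (fun x hx => sub2 (e1 ▸ (h12.spec k hk hx)))
  apply Set.Subset.antisymm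
  · exact h12.spec k hk
  · intro x hx
    have hx2 : x ∈ D₁.Uc (h21.i' + (k + c)) := sub2 (e1 ▸ hx)
    rwa [Uc_congr D₁ hidx.symm] at hx2

/-- The phase-aligned sets of a domain lying below a reference domain. -/
def phase {D D' : SInvDomain f} (h : DomLE D D') (ρ : ℕ) : Set M :=
  D.Uc (h.i + (D'.r - h.i' % D'.r) + ρ)

lemma phase_nonempty {D D' : SInvDomain f} (h : DomLE D D') (ρ : ℕ) :
    (phase h ρ).Nonempty := D.nonempty _

lemma phase_subset {D D' : SInvDomain f} (h : DomLE D D') (ρ : ℕ) :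
    phase h ρ ⊆ D'.Uc ρ := by
  have hmlt := Nat.mod_lt h.i' D'.r_pos
  have hk : 1 ≤ (D'.r - h.i' % D'.r) + ρ := by omega
  have h1 : phase h ρ = D.Uc (h.i + ((D'.r - h.i' % D'.r) + ρ)) := by
    show D.Uc _ = D.Uc _
    rw [show h.i + (D'.r - h.i' % D'.r) + ρ = h.i + ((D'.r - h.i' % D'.r) + ρ) by omega]
  have h2 : D'.Uc (h.i' + ((D'.r - h.i' % D'.r) + ρ)) = D'.Uc ρ := by
    apply Uc_congr
    have h3 := mod_cancel8 D'.r_pos h.i' ρ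
    rw [show h.i' + ((D'.r - h.i' % D'.r) + ρ) = h.i' + (D'.r - h.i' % D'.r) + ρ by omega, h3]
  intro x hx
  rw [h1] at hx
  have := h.spec _ hk hx
  rwa [h2] at this

lemma phase_inv {D D' : SInvDomain f} (h : DomLE D D') {ρ k : ℕ} (hk : 1 ≤ k) {z : M}
    (hz : z ∈ phase h ρ) (t : ℕ → T) : pIter f k z t ∈ phase h (ρ + k) := by
  have h1 : pIter f k z t ∈ D.Uc (h.i + (D'.r - h.i' % D'.r) + ρ + k) := Uc_inv D hk hz t
  have h2 : D.Uc (h.i + (D'.r - h.i' % D'.r) + ρ + k) = phase h (ρ + k) := by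
    show D.Uc _ = D.Uc _
    rw [show h.i + (D'.r - h.i' % D'.r) + ρ + k = h.i + (D'.r - h.i' % D'.r) + (ρ + k) by omega]
  rwa [h2] at h1

lemma phase_congr {D D' : SInvDomain f} (h : DomLE D D') (hr : D.r = D'.r) {ρ ρ' : ℕ}
    (e : ρ % D'.r = ρ' % D'.r) : phase h ρ = phase h ρ' := by
  apply Uc_congr
  rw [hr]
  exact mod_cong_add8 e _

lemma phase_mono {D₁ D₂ D₃ : SInvDomain f} (h1 : DomLE D₁ D₃) (h2 : DomLE D₂ D₃)
    (h12 : DomLE D₁ D₂) (hr1 : D₁.r = D₃.r) (hr2 : D₂.r = D₃.r) (ρ : ℕ) :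
    phase h1 ρ ⊆ phase h2 ρ := by
  have hr1p := D₁.r_pos
  have hr3p := D₃.r_pos
  set A := h1.i + (D₃.r - h1.i' % D₃.r) with hA
  set Bc := h2.i + (D₃.r - h2.i' % D₃.r) with hBc
  set k := (A + ρ) + (D₁.r - h12.i % D₁.r) with hk
  have hmlt := Nat.mod_lt h12.i hr1p
  have hk1 : 1 ≤ k := by omega
  have e1 : phase h1 ρ = D₁.Uc (h12.i + k) := by
    show D₁.Uc (A + ρ) = D₁.Uc (h12.i + k)
    apply Uc_congr
    have h3 := mod_cancel8 hr1p h12.i (A + ρ)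
    have he : h12.i + k = h12.i + (D₁.r - h12.i % D₁.r) + (A + ρ) := by omega
    rw [he, h3]
  set m := h12.i' + k with hm
  set ρ' := m + (D₃.r - Bc % D₃.r) with hρ'
  have e2 : D₂.Uc m = phase h2 ρ' := by
    show D₂.Uc m = D₂.Uc (Bc + ρ')
    apply Uc_congr
    have h3 := mod_cancel8 hr3p Bc m
    have he : Bc + ρ' = Bc + (D₃.r - Bc % D₃.r) + m := by omega
    rw [hr2, he, h3]
  have hsub : phase h1 ρ ⊆ phase h2 ρ' := by
    rw [e1, ← e2]
    exact h12.spec k hk1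
  have hidx : ρ % D₃.r = ρ' % D₃.r :=
    Uc_index_eq D₃ (phase_nonempty h1 ρ) (phase_subset h1 ρ)
      (fun x hx => phase_subset h2 ρ' (hsub hx))
  rwa [show phase h2 ρ' = phase h2 ρ from phase_congr h2 hr2 hidx.symm] at hsub

/-- Hypothesis (A) fattening: the image of a point of the closure of a domain set after
`κ ≥ max K 1` steps contains a `ξ₀/2`-ball inside the corresponding domain set. -/
lemma fat8 (a₀ : T) {K : ℕ} {ξ₀ : ℝ} (hfc : Continuous fun p : M × T => f p.1 p.2)
    (hξ₀ : 0 < ξ₀)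
    (hypA : ∀ k : ℕ, K ≤ k → ∀ x : M,
      Metric.ball (pIter f k x fun _ => a₀) ξ₀ ⊆ Set.range (pIter f k x))
    (E : SInvDomain f) {α κ : ℕ} (hκK : K ≤ κ) (hκ1 : 1 ≤ κ) {z : M}
    (hz : z ∈ closure (E.Uc α)) :
    Metric.ball (pIter f κ z fun _ => a₀) (ξ₀ / 2) ⊆ E.Uc (α + κ) := by
  intro w hw
  have hg : Continuous fun v : M => pIter f κ v fun _ => a₀ := pIter_continuous hfc κ _
  have hzo : z ∈ (fun v : M => pIter f κ v fun _ => a₀) ⁻¹'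
      Metric.ball (pIter f κ z fun _ => a₀) (ξ₀ / 2) := by
    simp only [Set.mem_preimage]
    exact Metric.mem_ball_self (half_pos hξ₀)
  obtain ⟨u, hu1, hu2⟩ :=
    _root_.mem_closure_iff.1 hz _ (Metric.isOpen_ball.preimage hg) hzo
  have hwball : w ∈ Metric.ball (pIter f κ u fun _ => a₀) ξ₀ := by
    have hd : dist (pIter f κ u fun _ => a₀) (pIter f κ z fun _ => a₀) < ξ₀ / 2 := hu1
    have hww : dist w (pIter f κ z fun _ => a₀) < ξ₀ / 2 := hw
    have := dist_triangle w (pIter f κ z fun _ => a₀) (pIter f κ u fun _ => a₀)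
    rw [Metric.mem_ball]
    rw [dist_comm] at hd
    linarith
  obtain ⟨t, ht⟩ := hypA κ hκK u hwball
  rw [← ht]
  exact Uc_inv E hκ1 hu2 t

/-- Every set of an s-invariant domain contains a `ξ₀`-ball. -/
lemma ball_in_Uc (a₀ : T) {K : ℕ} {ξ₀ : ℝ}
    (hypA : ∀ k : ℕ, K ≤ k → ∀ x : M,
      Metric.ball (pIter f k x fun _ => a₀) ξ₀ ⊆ Set.range (pIter f k x))
    (E : SInvDomain f) (j : ℕ) :
    ∃ cpt : M, Metric.ball cpt ξ₀ ⊆ E.Uc j := by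
  obtain ⟨x₀, hx₀⟩ := Uc_nonempty E 0
  set K₁ := max K 1 with hK₁
  set kj := K₁ * E.r + j with hkj
  have hr1 : K₁ ≤ K₁ * E.r := Nat.le_mul_of_pos_right K₁ E.r_pos
  have h1 : K₁ ≤ kj := by omega
  refine ⟨pIter f kj x₀ fun _ => a₀, fun w hw => ?_⟩
  obtain ⟨t, ht⟩ := hypA kj (le_trans (le_max_left K 1) h1) x₀ hw
  have hmem : w ∈ E.Uc (0 + kj) := ht ▸ Uc_inv E (le_trans (le_max_right K 1) h1) hx₀ t
  rwa [Uc_congr E (show (0 + kj) % E.r = j % E.r by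
    rw [Nat.zero_add, hkj, mul_comm, Nat.mul_add_mod])] at hmem

/-- The number of sets of an s-invariant domain is uniformly bounded. -/
lemma r_bound8 (a₀ : T) {K : ℕ} {ξ₀ : ℝ} (hξ₀ : 0 < ξ₀)
    (hypA : ∀ k : ℕ, K ≤ k → ∀ x : M,
      Metric.ball (pIter f k x fun _ => a₀) ξ₀ ⊆ Set.range (pIter f k x)) :
    ∃ N : ℕ, ∀ E : SInvDomain f, E.r ≤ N := by
  obtain ⟨s, hs⟩ := isCompact_univ.elim_finite_subcover
    (fun x : M => Metric.ball x (ξ₀ / 2)) (fun _ => Metric.isOpen_ball)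
    (fun x _ => Set.mem_iUnion.2 ⟨x, Metric.mem_ball_self (half_pos hξ₀)⟩)
  refine ⟨s.card, fun E => ?_⟩
  have hc : ∀ j : Fin E.r, ∃ cpt, Metric.ball cpt ξ₀ ⊆ E.Uc j.val :=
    fun j => ball_in_Uc a₀ hypA E j.val
  choose cpt hcpt using hc
  have hcov : ∀ j : Fin E.r, ∃ x, x ∈ s ∧ cpt j ∈ Metric.ball x (ξ₀ / 2) := fun j => by
    have h0 := hs (Set.mem_univ (cpt j))
    rw [Set.mem_iUnion₂] at h0
    obtain ⟨x, hx, hb⟩ := h0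
    exact ⟨x, hx, hb⟩
  choose φ hφs hφb using hcov
  have hinj : Function.Injective fun j : Fin E.r => (⟨φ j, hφs j⟩ : {x // x ∈ s}) := by
    intro j j' he
    simp only [Subtype.mk.injEq] at he
    by_contra hne
    have h1 := hφb j
    have h2 := hφb j'
    rw [Metric.mem_ball] at h1 h2
    rw [he] at h1
    have hd : dist (cpt j') (cpt j) < ξ₀ := by
      have := dist_triangle (cpt j') (φ j') (cpt j)
      rw [dist_comm (φ j') (cpt j)] at this
      linarith
    have hm1 : cpt j' ∈ E.Uc j.val := hcpt j (by rwa [Metric.mem_ball])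
    have hm2 : cpt j' ∈ E.Uc j'.val := hcpt j' (Metric.mem_ball_self hξ₀)
    have hidx := Uc_index_eq E (Set.singleton_nonempty (cpt j'))
      (Set.singleton_subset_iff.2 hm1) (Set.singleton_subset_iff.2 hm2)
    rw [Nat.mod_eq_of_lt j.isLt, Nat.mod_eq_of_lt j'.isLt] at hidx
    exact hne (Fin.ext hidx)
  calc E.r = Fintype.card (Fin E.r) := (Fintype.card_fin _).symm
    _ ≤ Fintype.card {x // x ∈ s} := Fintype.card_le_of_injective _ hinj
    _ = s.card := Fintype.card_coe s

/-- The union of balls around deterministic images of points of `KK`. -/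
def ballsUnion (f : M → T → M) (a₀ : T) (K₁ rs : ℕ) (ξ₀ : ℝ) (KK : ℕ → Set M) (ρ : ℕ) :
    Set M :=
  ⋃ (κ : ℕ) (_ : K₁ ≤ κ) (s : ℕ) (_ : (s + κ) % rs = ρ % rs) (z : M) (_ : z ∈ KK s),
    Metric.ball (pIter f κ z fun _ => a₀) (ξ₀ / 2)

lemma ballsUnion_isOpen (a₀ : T) (K₁ rs : ℕ) (ξ₀ : ℝ) (KK : ℕ → Set M) (ρ : ℕ) :
    IsOpen (ballsUnion f a₀ K₁ rs ξ₀ KK ρ) :=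
  isOpen_iUnion fun _ => isOpen_iUnion fun _ => isOpen_iUnion fun _ => isOpen_iUnion fun _ =>
    isOpen_iUnion fun _ => isOpen_iUnion fun _ => Metric.isOpen_ball

lemma ballsUnion_congr (a₀ : T) (K₁ rs : ℕ) (ξ₀ : ℝ) (KK : ℕ → Set M) {ρ ρ' : ℕ}
    (h : ρ % rs = ρ' % rs) :
    ballsUnion f a₀ K₁ rs ξ₀ KK ρ = ballsUnion f a₀ K₁ rs ξ₀ KK ρ' := by
  unfold ballsUnion
  rw [h]

lemma ballsUnion_nonempty (a₀ : T) (K₁ : ℕ) {rs : ℕ} (hrs : 0 < rs) {ξ₀ : ℝ} (hξ₀ : 0 < ξ₀)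
    {KK : ℕ → Set M} (hK : ∀ s, (KK s).Nonempty) (ρ : ℕ) :
    (ballsUnion f a₀ K₁ rs ξ₀ KK ρ).Nonempty := by
  obtain ⟨z, hz⟩ := hK (ρ + (rs - K₁ % rs))
  refine ⟨pIter f K₁ z fun _ => a₀, ?_⟩
  simp only [ballsUnion, Set.mem_iUnion]
  refine ⟨K₁, le_rfl, ρ + (rs - K₁ % rs), ?_, z, hz, Metric.mem_ball_self (half_pos hξ₀)⟩
  have h3 := mod_cancel8 hrs K₁ ρ
  rw [show ρ + (rs - K₁ % rs) + K₁ = K₁ + (rs - K₁ % rs) + ρ by omega, h3]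

/-- The forward orbit of a family of sets. -/
def orbUnion (f : M → T → M) (a₀ : T) (rs : ℕ) (BB : ℕ → Set M) (ρ : ℕ) : Set M :=
  ⋃ (l : ℕ) (s : ℕ) (_ : (s + l) % rs = ρ % rs) (t : ℕ → T),
    (fun v => pIter f l v t) '' BB s

lemma orbUnion_isOpen (hfh : ∀ t : T, IsHomeomorph fun z : M => f z t) (a₀ : T) (rs : ℕ)
    {BB : ℕ → Set M} (hB : ∀ s, IsOpen (BB s)) (ρ : ℕ) :
    IsOpen (orbUnion f a₀ rs BB ρ) :=
  isOpen_iUnion fun l => isOpen_iUnion fun s => isOpen_iUnion fun _ => isOpen_iUnion fun t =>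
    pIter_isOpenMap hfh l t _ (hB s)

lemma orbUnion_congr (a₀ : T) (rs : ℕ) (BB : ℕ → Set M) {ρ ρ' : ℕ} (h : ρ % rs = ρ' % rs) :
    orbUnion f a₀ rs BB ρ = orbUnion f a₀ rs BB ρ' := by
  unfold orbUnion
  rw [h]

lemma subset_orbUnion (a₀ : T) (rs : ℕ) (BB : ℕ → Set M) (ρ : ℕ) :
    BB ρ ⊆ orbUnion f a₀ rs BB ρ := by
  intro v hv
  simp only [orbUnion, Set.mem_iUnion, Set.mem_image]
  exact ⟨0, ρ, rfl, fun _ => a₀, v, hv, rfl⟩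

lemma orbUnion_inv (a₀ : T) (rs : ℕ) (BB : ℕ → Set M) {ρ k : ℕ} {z : M}
    (hz : z ∈ orbUnion f a₀ rs BB ρ) (t' : ℕ → T) :
    pIter f k z t' ∈ orbUnion f a₀ rs BB (ρ + k) := by
  simp only [orbUnion, Set.mem_iUnion, Set.mem_image] at hz ⊢
  obtain ⟨l, s, hsl, t, v, hv, rfl⟩ := hz
  refine ⟨l + k, s, ?_, fun i => if i < l then t i else t' (i - l), v, hv,
    (pIter_pIter k l v t t').symm⟩
  rw [show s + (l + k) = (s + l) + k by omega]
  exact mod_add_cong8 hsl k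

lemma orbUnion_subset (a₀ : T) (rs : ℕ) (BB : ℕ → Set M) (Ph : ℕ → Set M)
    (hinv : ∀ s k, 1 ≤ k → ∀ z ∈ Ph s, ∀ t : ℕ → T, pIter f k z t ∈ Ph (s + k))
    (hcong : ∀ s s', s % rs = s' % rs → Ph s = Ph s')
    (hBP : ∀ s, BB s ⊆ Ph s) (ρ : ℕ) : orbUnion f a₀ rs BB ρ ⊆ Ph ρ := by
  intro w hw
  simp only [orbUnion, Set.mem_iUnion, Set.mem_image] at hw
  obtain ⟨l, s, hsl, t, v, hv, rfl⟩ := hw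
  rcases Nat.eq_zero_or_pos l with hl | hl
  · subst hl
    have hmod : s % rs = ρ % rs := by simpa using hsl
    exact (hcong s ρ hmod) ▸ hBP s hv
  · have := hinv s l hl v (hBP s hv) t
    rwa [hcong (s + l) ρ hsl] at this

end Aux8


section Chain8

set_option linter.unusedSectionVars false
set_option linter.unusedVariables false
set_option maxHeartbeats 1000000

variable {M : Type*} [MetricSpace M] [CompactSpace M] {T : Type*} [TopologicalSpace T]
  {f : M → T → M}

/-- Every chain of s-invariant domains has a lower bound. -/
lemma chain_lower8 (a₀ : T) (K : ℕ) {ξ₀ : ℝ} (hξ₀ : 0 < ξ₀)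
    (hfc : Continuous fun p : M × T => f p.1 p.2)
    (hfh : ∀ t : T, IsHomeomorph fun z : M => f z t)
    (hypA : ∀ k : ℕ, K ≤ k → ∀ x : M,
      Metric.ball (pIter f k x fun _ => a₀) ξ₀ ⊆ Set.range (pIter f k x))
    (𝒞 : Set (SInvDomain f)) (hchain : ∀ X ∈ 𝒞, ∀ Y ∈ 𝒞, DomLE X Y ∨ DomLE Y X)
    (hne : 𝒞.Nonempty) : ∃ L : SInvDomain f, ∀ X ∈ 𝒞, DomLE L X := by
  classical
  obtain ⟨N, hN⟩ := r_bound8 a₀ hξ₀ hypA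
  -- a maximal-`r` element of the chain
  have hbdd : BddAbove (SInvDomain.r '' 𝒞) := ⟨N, by rintro _ ⟨E, hE, rfl⟩; exact hN E⟩
  obtain ⟨Dstar, hDstar, hDr⟩ := Nat.sSup_mem (hne.image SInvDomain.r) hbdd
  have hmax : ∀ X ∈ 𝒞, X.r ≤ Dstar.r := fun X hX => by
    rw [hDr]; exact le_csSup hbdd ⟨X, hX, rfl⟩
  have hrs_pos : 0 < Dstar.r := Dstar.r_pos
  -- the tail of the chain below `Dstar`
  let ι := {X : SInvDomain f // X ∈ 𝒞 ∧ DomLE X Dstar}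
  haveI hιne : Nonempty ι := ⟨⟨Dstar, hDstar, domle_refl _⟩⟩
  have r_eq : ∀ X : ι, X.1.r = Dstar.r := fun X =>
    Nat.le_antisymm (hmax X.1 X.2.1) (Nat.le_of_dvd X.1.r_pos (domle_dvd X.2.2))
  have phase_nest : ∀ X Y : ι, DomLE X.1 Y.1 → ∀ ρ, phase X.2.2 ρ ⊆ phase Y.2.2 ρ :=
    fun X Y h ρ => phase_mono X.2.2 Y.2.2 h (r_eq X) (r_eq Y) ρ
  -- the compact cores
  let Kint : ℕ → Set M := fun s => ⋂ X : ι, closure (phase X.2.2 s)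
  have Kint_ne : ∀ s, (Kint s).Nonempty := by
    intro s
    apply IsCompact.nonempty_iInter_of_directed_nonempty_isCompact_isClosed
    · intro X Y
      rcases hchain X.1 X.2.1 Y.1 Y.2.1 with h | h
      · exact ⟨X, Set.Subset.rfl, closure_mono (phase_nest X Y h s)⟩
      · exact ⟨Y, closure_mono (phase_nest Y X h s), Set.Subset.rfl⟩
    · exact fun X => (phase_nonempty X.2.2 s).closure
    · exact fun X => isClosed_closure.isCompact
    · exact fun X => isClosed_closure
  have Kint_sub : ∀ (X : ι) (s : ℕ), Kint s ⊆ closure (phase X.2.2 s) :=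
    fun X s => Set.iInter_subset _ X
  set K₁ := max K 1 with hK₁
  -- the seed balls and their forward orbit
  let Bs : ℕ → Set M := ballsUnion f a₀ K₁ Dstar.r ξ₀ Kint
  let Ls : ℕ → Set M := orbUnion f a₀ Dstar.r Bs
  have Bs_sub : ∀ (X : ι) (ρ : ℕ), Bs ρ ⊆ phase X.2.2 ρ := by
    intro X ρ w hw
    simp only [Bs, ballsUnion, Set.mem_iUnion] at hw
    obtain ⟨κ, hκ, s, hsmod, z, hz, hw⟩ := hw
    have hz' : z ∈ closure (phase X.2.2 s) := Kint_sub X s hz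
    have hfat := fat8 a₀ hfc hξ₀ hypA X.1
      (le_trans (le_max_left K 1) hκ) (le_trans (le_max_right K 1) hκ)
      (α := X.2.2.i + (Dstar.r - X.2.2.i' % Dstar.r) + s) hz'
    have h2 : X.1.Uc (X.2.2.i + (Dstar.r - X.2.2.i' % Dstar.r) + s + κ) = phase X.2.2 ρ := by
      have e1 : X.1.Uc (X.2.2.i + (Dstar.r - X.2.2.i' % Dstar.r) + s + κ)
          = phase X.2.2 (s + κ) := by
        show X.1.Uc _ = X.1.Uc _
        rw [show X.2.2.i + (Dstar.r - X.2.2.i' % Dstar.r) + s + κ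
          = X.2.2.i + (Dstar.r - X.2.2.i' % Dstar.r) + (s + κ) by omega]
      rw [e1]
      exact phase_congr X.2.2 (r_eq X) hsmod
    rw [← h2]
    exact hfat hw
  have Ls_sub : ∀ (X : ι) (ρ : ℕ), Ls ρ ⊆ phase X.2.2 ρ := by
    intro X ρ
    exact orbUnion_subset a₀ Dstar.r Bs (phase X.2.2)
      (fun s k hk z hz t => phase_inv X.2.2 hk hz t)
      (fun s s' h => phase_congr X.2.2 (r_eq X) h)
      (Bs_sub X) ρ
  have Ls_subUc : ∀ ρ : ℕ, Ls ρ ⊆ Dstar.Uc ρ := fun ρ x hx =>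
    phase_subset (domle_refl Dstar) ρ (Ls_sub ⟨Dstar, hDstar, domle_refl Dstar⟩ ρ hx)
  -- assemble the lower-bound domain
  let Ldom : SInvDomain f :=
    { r := Dstar.r
      r_pos := hrs_pos
      U := fun i => Ls i.val
      isOpen := fun i => orbUnion_isOpen hfh a₀ Dstar.r
        (fun s => ballsUnion_isOpen a₀ K₁ Dstar.r ξ₀ Kint s) i.val
      nonempty := fun i => (ballsUnion_nonempty a₀ K₁ hrs_pos hξ₀ Kint_ne i.val).mono
        (subset_orbUnion a₀ Dstar.r Bs i.val)
      separated := by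
        intro i j hij
        have h1 : Ls i.val ⊆ Dstar.U i := by
          intro x hx
          have h0 := Ls_subUc i.val hx
          rwa [show Dstar.Uc i.val = Dstar.U i from
            congrArg Dstar.U (Fin.ext (Nat.mod_eq_of_lt i.isLt))] at h0
        have h2 : Ls j.val ⊆ Dstar.U j := by
          intro x hx
          have h0 := Ls_subUc j.val hx
          rwa [show Dstar.Uc j.val = Dstar.U j from
            congrArg Dstar.U (Fin.ext (Nat.mod_eq_of_lt j.isLt))] at h0
        apply Set.eq_empty_of_subset_empty
        intro x hx
        rw [← Dstar.separated i j hij]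
        exact ⟨closure_mono h1 hx.1, closure_mono h2 hx.2⟩
      invariant := by
        intro k hk i z hz t
        have h0 := orbUnion_inv a₀ Dstar.r Bs (ρ := i.val) (k := k) hz t
        rwa [orbUnion_congr a₀ Dstar.r Bs
          (show (i.val + k) % Dstar.r = ((i.val + k) % Dstar.r) % Dstar.r from
            (Nat.mod_mod_of_dvd _ dvd_rfl).symm)] at h0 }
  -- `Ldom` lies below every element of the tail
  have hLX : ∀ X : ι, DomLE Ldom X.1 := by
    intro X
    refine ⟨0, X.2.2.i + (Dstar.r - X.2.2.i' % Dstar.r), fun k hk => ?_⟩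
    show Ls ((0 + k) % Dstar.r) ⊆
      X.1.Uc (X.2.2.i + (Dstar.r - X.2.2.i' % Dstar.r) + k)
    intro x hx
    have h1 : x ∈ phase X.2.2 ((0 + k) % Dstar.r) := Ls_sub X _ hx
    have h2 : phase X.2.2 ((0 + k) % Dstar.r) = phase X.2.2 k :=
      phase_congr X.2.2 (r_eq X)
        (by rw [Nat.zero_add]; exact Nat.mod_mod_of_dvd k dvd_rfl)
    rw [h2] at h1
    exact h1
  refine ⟨Ldom, fun X hX => ?_⟩
  rcases hchain X hX Dstar hDstar with h | h
  · exact hLX ⟨X, hX, h⟩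
  · exact domle_trans (hLX ⟨Dstar, hDstar, domle_refl Dstar⟩) h

end Chain8


/-- Under hypothesis (A), minimal domains exist and every s-invariant
domain contains a minimal one. -/
theorem statement8
    (n : ℕ) (hn : 1 ≤ n) (a : EuclideanSpace ℝ (Fin n)) (ε : ℝ) (hε : 0 < ε)
    (a₀ : PSpace n a ε) (ha₀ : (a₀ : EuclideanSpace ℝ (Fin n)) = a)
    (ν : Measure (PSpace n a ε))
    (hν : ν = (volume (Metric.closedBall a ε))⁻¹ •
      ((volume : Measure (EuclideanSpace ℝ (Fin n))).comap Subtype.val))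
    (νinf : Measure (ℕ → PSpace n a ε)) (hprobν : IsProbabilityMeasure νinf)
    (hνinf : ∀ k : ℕ, νinf.map (fun t (i : Fin k) => t i) = Measure.pi fun _ => ν)
    (M : Type*) [MetricSpace M] [CompactSpace M] [MeasurableSpace M] [BorelSpace M]
    (m : Measure M) (hmprob : IsProbabilityMeasure m)
    (hmpos : ∀ O : Set M, IsOpen O → O.Nonempty → 0 < m O)
    (f : M → PSpace n a ε → M)
    (hfc : Continuous fun p : M × PSpace n a ε => f p.1 p.2)
    (hfh : ∀ t : PSpace n a ε, IsHomeomorph fun z : M => f z t)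
    (hfnull : ∀ (t : PSpace n a ε) (A : Set M), m A = 0 →
      m ((fun z => f z t) '' A) = 0 ∧ m ((fun z => f z t) ⁻¹' A) = 0)
    (K : ℕ) (ξ₀ : ℝ) (hξ₀ : 0 < ξ₀)
    (hypA : ∀ k : ℕ, K ≤ k → ∀ x : M,
      Metric.ball (pIter f k x fun _ => a₀) ξ₀ ⊆ Set.range (pIter f k x))
    : (∃ ℳ : SInvDomain f, MinimalDom ℳ) ∧
      ∀ D : SInvDomain f, ∃ ℳ : SInvDomain f, MinimalDom ℳ ∧ DomLE ℳ D := by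
  classical
  have hMne : Nonempty M := by
    by_contra h
    rw [not_nonempty_iff] at h
    have h1 : m Set.univ = 1 := hmprob.measure_univ
    rw [Set.univ_eq_empty_iff.2 h, measure_empty] at h1
    exact zero_ne_one h1
  have part2 : ∀ D : SInvDomain f, ∃ ℳ : SInvDomain f, MinimalDom ℳ ∧ DomLE ℳ D := by
    intro D
    letI : Preorder {E : SInvDomain f // DomLE E D} :=
      { le := fun X Y => DomLE Y.1 X.1
        le_refl := fun X => domle_refl _
        le_trans := fun X Y Z h1 h2 => domle_trans h2 h1 }
    have hbdd : ∀ c : Set {E : SInvDomain f // DomLE E D},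
        IsChain (· ≤ ·) c → BddAbove c := by
      intro c hc
      by_cases hcne : c.Nonempty
      · have hch : ∀ X ∈ Subtype.val '' c, ∀ Y ∈ Subtype.val '' c,
            DomLE X Y ∨ DomLE Y X := by
          rintro X ⟨x, hx, rfl⟩ Y ⟨y, hy, rfl⟩
          by_cases hxy : x = y
          · subst hxy; exact Or.inl (domle_refl _)
          · rcases hc hx hy hxy with h | h
            · exact Or.inr h
            · exact Or.inl h
        obtain ⟨L, hL⟩ := chain_lower8 a₀ K hξ₀ hfc hfh hypA (Subtype.val '' c) hch
          (hcne.image _)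
        obtain ⟨x₀, hx₀⟩ := hcne
        refine ⟨⟨L, domle_trans (hL x₀.1 ⟨x₀, hx₀, rfl⟩) x₀.2⟩, ?_⟩
        intro y hy
        exact hL y.1 ⟨y, hy, rfl⟩
      · exact ⟨⟨D, domle_refl D⟩, fun a ha => absurd ⟨a, ha⟩ hcne⟩
    obtain ⟨mm, hmm⟩ := zorn_le hbdd
    refine ⟨mm.1, ?_, mm.2⟩
    intro D' hD'
    have hmem : DomLE D' D := domle_trans hD' mm.2
    have h2 : DomLE mm.1 D' :=
      hmm (show mm ≤ (⟨D', hmem⟩ : {E : SInvDomain f // DomLE E D}) from hD')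
    exact domle_antisymm hD' h2
  refine ⟨?_, part2⟩
  have : Nonempty M := hMne
  let Dtop : SInvDomain f :=
    { r := 1, r_pos := one_pos, U := fun _ => Set.univ,
      isOpen := fun _ => isOpen_univ,
      nonempty := fun _ => Set.univ_nonempty,
      separated := fun i j hij => absurd (Subsingleton.elim i j) hij,
      invariant := fun k hk i z hz t => Set.mem_univ _ }
  obtain ⟨ℳ, h1, _⟩ := part2 Dtop
  exact ⟨ℳ, h1⟩

end
end

section
/- Assume the setting. If ℳ = (𝒰₀,…,𝒰_{r−1}) and ℳ′ = (𝒰′₀,…,𝒰′_{r′−1}) are minimal domains such that 𝒰_i ∩ 𝒰′_j ≠ ∅ for some 0 ≤ i ≤ r−1 and 0 ≤ j ≤ r′−1, then ℳ and ℳ′ coincide up to cyclic shift (in particular r = r′ and ⋃ℳ = ⋃ℳ′). Consequently, minimal domains that do not coincide up to cyclic shift have disjoint unions. -/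
open MeasureTheory Metric Set Filter Topology

noncomputable section

-- ==== auxiliary lemmas start here ====

private lemma modA {r L : ℕ} (h : r ∣ L) (a b : ℕ) : (a + b % L) % r = (a + b) % r := by
  rw [Nat.add_mod, Nat.mod_mod_of_dvd b h, ← Nat.add_mod]

private lemma modC {r L : ℕ} (h : r ∣ L) (a : ℕ) : (a + L) % r = a % r := by
  obtain ⟨c, rfl⟩ := h
  rw [Nat.add_mul_mod_self_left]

private lemma modB {r r' l l' : ℕ} (hl : l < Nat.lcm r r') (hl' : l' < Nat.lcm r r')
    (h1 : l % r = l' % r) (h2 : l % r' = l' % r') : l = l' := by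
  rcases le_total l l' with h | h
  · have d1 : r ∣ l' - l := (Nat.modEq_iff_dvd' h).1 h1
    have d2 : r' ∣ l' - l := (Nat.modEq_iff_dvd' h).1 h2
    have := Nat.eq_zero_of_dvd_of_lt (Nat.lcm_dvd d1 d2) (by omega)
    omega
  · have d1 : r ∣ l - l' := (Nat.modEq_iff_dvd' h).1 h1.symm
    have d2 : r' ∣ l - l' := (Nat.modEq_iff_dvd' h).1 h2.symm
    have := Nat.eq_zero_of_dvd_of_lt (Nat.lcm_dvd d1 d2) (by omega)
    omega

private lemma U_mk_congr {M T : Type*} [TopologicalSpace M] {f : M → T → M}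
    (D : SInvDomain f) {a b : ℕ} (ha : a < D.r) (hb : b < D.r) (h : a = b) :
    D.U ⟨a, ha⟩ = D.U ⟨b, hb⟩ := by subst h; rfl

private lemma U_inj {M T : Type*} [TopologicalSpace M] {f : M → T → M}
    {D : SInvDomain f} {x y : Fin D.r} (h : D.U x = D.U y) : x = y := by
  by_contra hne
  obtain ⟨w, hw⟩ := D.nonempty x
  have hmem : w ∈ closure (D.U x) ∩ closure (D.U y) :=
    ⟨subset_closure hw, subset_closure (h ▸ hw)⟩
  rw [D.separated x y hne] at hmem
  exact hmem

private lemma cyclicEq_symm {M T : Type*} [TopologicalSpace M] {f : M → T → M}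
    {D D' : SInvDomain f} (h : CyclicEq D D') : CyclicEq D' D := by
  obtain ⟨p, q, h⟩ := h
  exact ⟨q, p, fun k hk => (h k hk).symm⟩

private lemma cyclicEq_r {M T : Type*} [TopologicalSpace M] {f : M → T → M}
    {D D' : SInvDomain f} (h : CyclicEq D D') : D.r = D'.r := by
  obtain ⟨p, q, h⟩ := h
  have dvd1 : D'.r ∣ D.r := by
    have e1 := h 1 le_rfl
    have e2 := h (1 + D.r) (by omega)
    rw [U_mk_congr D _ (Nat.mod_lt _ D.r_pos)
      (show (p + (1 + D.r)) % D.r = (p + 1) % D.r by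
        rw [← add_assoc, Nat.add_mod_right])] at e2
    have hfin : ((⟨(q + 1) % D'.r, Nat.mod_lt _ D'.r_pos⟩ : Fin D'.r)) =
        ⟨(q + (1 + D.r)) % D'.r, Nat.mod_lt _ D'.r_pos⟩ := U_inj (e1.symm.trans e2)
    have hval : (q + 1) % D'.r = (q + (1 + D.r)) % D'.r := congrArg Fin.val hfin
    have := (Nat.modEq_iff_dvd' (by omega : q + 1 ≤ q + (1 + D.r))).1 hval
    have h3 : q + (1 + D.r) - (q + 1) = D.r := by omega
    rwa [h3] at this
  have dvd2 : D.r ∣ D'.r := by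
    have e1 := h 1 le_rfl
    have e2 := h (1 + D'.r) (by omega)
    rw [U_mk_congr D' _ (Nat.mod_lt _ D'.r_pos)
      (show (q + (1 + D'.r)) % D'.r = (q + 1) % D'.r by
        rw [← add_assoc, Nat.add_mod_right])] at e2
    have hfin : ((⟨(p + 1) % D.r, Nat.mod_lt _ D.r_pos⟩ : Fin D.r)) =
        ⟨(p + (1 + D'.r)) % D.r, Nat.mod_lt _ D.r_pos⟩ :=
      U_inj (e1.trans e2.symm)
    have hval : (p + 1) % D.r = (p + (1 + D'.r)) % D.r := congrArg Fin.val hfin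
    have := (Nat.modEq_iff_dvd' (by omega : p + 1 ≤ p + (1 + D'.r))).1 hval
    have h3 : p + (1 + D'.r) - (p + 1) = D'.r := by omega
    rwa [h3] at this
  exact Nat.dvd_antisymm dvd2 dvd1

private lemma carrier_subset {M T : Type*} [TopologicalSpace M] {f : M → T → M}
    {D D' : SInvDomain f} (h : CyclicEq D D') : D.carrier ⊆ D'.carrier := by
  obtain ⟨p, q, h⟩ := h
  intro x hx
  rw [SInvDomain.carrier, mem_iUnion] at hx
  obtain ⟨i, hi⟩ := hx
  obtain ⟨r0, hr0⟩ : ∃ r0, D.r = r0 + 1 := ⟨D.r - 1, by have := D.r_pos; omega⟩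
  set k : ℕ := (i : ℕ) + p * r0 + D.r with hk
  have hk1 : 1 ≤ k := by have := D.r_pos; omega
  have hmul : (p + 1) * D.r = p * r0 + p + D.r := by rw [hr0]; ring
  have hval : (p + k) % D.r = (i : ℕ) := by
    have hstep : p + k = (i : ℕ) + (p + 1) * D.r := by omega
    rw [hstep, Nat.add_mul_mod_self_right, Nat.mod_eq_of_lt i.isLt]
  have hfin : ((⟨(p + k) % D.r, Nat.mod_lt _ D.r_pos⟩ : Fin D.r)) = i :=
    Fin.ext hval
  have := (h k hk1)
  rw [hfin] at this
  rw [SInvDomain.carrier, mem_iUnion]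
  exact ⟨_, this ▸ hi⟩

private lemma carrier_eq {M T : Type*} [TopologicalSpace M] {f : M → T → M}
    {D D' : SInvDomain f} (h : CyclicEq D D') : D.carrier = D'.carrier :=
  Subset.antisymm (carrier_subset h) (carrier_subset (cyclicEq_symm h))

private lemma key {M T : Type*} [TopologicalSpace M] {f : M → T → M} (t₀ : T)
    (ℳ ℳ' : SInvDomain f) (hmin : MinimalDom ℳ) (hmin' : MinimalDom ℳ')
    (hmeet : ∃ (i : Fin ℳ.r) (j : Fin ℳ'.r), (ℳ.U i ∩ ℳ'.U j).Nonempty) :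
    CyclicEq ℳ ℳ' := by
  obtain ⟨i, j, z, hz, hz'⟩ := hmeet
  set L : ℕ := Nat.lcm ℳ.r ℳ'.r with hLdef
  have hL : 0 < L := Nat.lcm_pos ℳ.r_pos ℳ'.r_pos
  have hdr : ℳ.r ∣ L := Nat.dvd_lcm_left _ _
  have hdr' : ℳ'.r ∣ L := Nat.dvd_lcm_right _ _
  set D : SInvDomain f :=
    { r := L
      r_pos := hL
      U := fun l => ℳ.U ⟨((i : ℕ) + (l : ℕ)) % ℳ.r, Nat.mod_lt _ ℳ.r_pos⟩ ∩
        ℳ'.U ⟨((j : ℕ) + (l : ℕ)) % ℳ'.r, Nat.mod_lt _ ℳ'.r_pos⟩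
      isOpen := fun l => (ℳ.isOpen _).inter (ℳ'.isOpen _)
      nonempty := by
        intro l
        refine ⟨pIter f ((l : ℕ) + L) z (fun _ => t₀), ?_, ?_⟩
        · have h1 := ℳ.invariant ((l : ℕ) + L) (by omega) i z hz (fun _ => t₀)
          rwa [U_mk_congr ℳ _ (Nat.mod_lt _ ℳ.r_pos)
            (show ((i : ℕ) + ((l : ℕ) + L)) % ℳ.r = ((i : ℕ) + (l : ℕ)) % ℳ.r by
              rw [← add_assoc, modC hdr])] at h1
        · have h1 := ℳ'.invariant ((l : ℕ) + L) (by omega) j z hz' (fun _ => t₀)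
          rwa [U_mk_congr ℳ' _ (Nat.mod_lt _ ℳ'.r_pos)
            (show ((j : ℕ) + ((l : ℕ) + L)) % ℳ'.r = ((j : ℕ) + (l : ℕ)) % ℳ'.r by
              rw [← add_assoc, modC hdr'])] at h1
      separated := by
        intro l l' hne
        by_cases hc : ((i : ℕ) + (l : ℕ)) % ℳ.r = ((i : ℕ) + (l' : ℕ)) % ℳ.r
        · by_cases hc' : ((j : ℕ) + (l : ℕ)) % ℳ'.r = ((j : ℕ) + (l' : ℕ)) % ℳ'.r
          · exfalso
            apply hne
            apply Fin.ext
            have m1 : (l : ℕ) % ℳ.r = (l' : ℕ) % ℳ.r :=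
              Nat.ModEq.add_left_cancel' (i : ℕ) hc
            have m2 : (l : ℕ) % ℳ'.r = (l' : ℕ) % ℳ'.r :=
              Nat.ModEq.add_left_cancel' (j : ℕ) hc'
            exact modB l.isLt l'.isLt m1 m2
          · have hsep := ℳ'.separated ⟨((j : ℕ) + (l : ℕ)) % ℳ'.r, Nat.mod_lt _ ℳ'.r_pos⟩
              ⟨((j : ℕ) + (l' : ℕ)) % ℳ'.r, Nat.mod_lt _ ℳ'.r_pos⟩
              (fun hh => hc' (congrArg Fin.val hh))
            refine eq_empty_of_subset_empty ?_
            rw [← hsep]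
            exact inter_subset_inter (closure_mono inter_subset_right)
              (closure_mono inter_subset_right)
        · have hsep := ℳ.separated ⟨((i : ℕ) + (l : ℕ)) % ℳ.r, Nat.mod_lt _ ℳ.r_pos⟩
            ⟨((i : ℕ) + (l' : ℕ)) % ℳ.r, Nat.mod_lt _ ℳ.r_pos⟩
            (fun hh => hc (congrArg Fin.val hh))
          refine eq_empty_of_subset_empty ?_
          rw [← hsep]
          exact inter_subset_inter (closure_mono inter_subset_left)
            (closure_mono inter_subset_left)
      invariant := by
        intro k hk l w hw t
        refine ⟨?_, ?_⟩
        · have h1 := ℳ.invariant k hk _ w hw.1 t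
          rwa [U_mk_congr ℳ _ (Nat.mod_lt _ ℳ.r_pos)
            (show (((i : ℕ) + (l : ℕ)) % ℳ.r + k) % ℳ.r
                = ((i : ℕ) + (((l : ℕ) + k) % L)) % ℳ.r by
              rw [Nat.mod_add_mod, modA hdr, ← add_assoc])] at h1
        · have h1 := ℳ'.invariant k hk _ w hw.2 t
          rwa [U_mk_congr ℳ' _ (Nat.mod_lt _ ℳ'.r_pos)
            (show (((j : ℕ) + (l : ℕ)) % ℳ'.r + k) % ℳ'.r
                = ((j : ℕ) + (((l : ℕ) + k) % L)) % ℳ'.r by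
              rw [Nat.mod_add_mod, modA hdr', ← add_assoc])] at h1 } with hD
  have hD1 : DomLE D ℳ := by
    refine ⟨0, (i : ℕ), fun k hk => ?_⟩
    have e : D.U ⟨(0 + k) % L, Nat.mod_lt _ hL⟩ ⊆
        ℳ.U ⟨((i : ℕ) + ((0 + k) % L)) % ℳ.r, Nat.mod_lt _ ℳ.r_pos⟩ :=
      inter_subset_left
    rwa [U_mk_congr ℳ _ (Nat.mod_lt _ ℳ.r_pos)
      (show ((i : ℕ) + ((0 + k) % L)) % ℳ.r = ((i : ℕ) + k) % ℳ.r by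
        rw [modA hdr, zero_add])] at e
  have hD2 : DomLE D ℳ' := by
    refine ⟨0, (j : ℕ), fun k hk => ?_⟩
    have e : D.U ⟨(0 + k) % L, Nat.mod_lt _ hL⟩ ⊆
        ℳ'.U ⟨((j : ℕ) + ((0 + k) % L)) % ℳ'.r, Nat.mod_lt _ ℳ'.r_pos⟩ :=
      inter_subset_right
    rwa [U_mk_congr ℳ' _ (Nat.mod_lt _ ℳ'.r_pos)
      (show ((j : ℕ) + ((0 + k) % L)) % ℳ'.r = ((j : ℕ) + k) % ℳ'.r by
        rw [modA hdr', zero_add])] at e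
  obtain ⟨p, q, h1⟩ := hmin D hD1
  obtain ⟨p', q', h2⟩ := hmin' D hD2
  obtain ⟨L0, hL0⟩ : ∃ L0, L = L0 + 1 := ⟨L - 1, by omega⟩
  refine ⟨q, q' + (p + p' * L0), fun k hk => ?_⟩
  set c : ℕ := p + p' * L0 with hc
  have key1 := (h1 k hk).symm
  have key2 := h2 (k + c) (by omega)
  have hmid : (p + k) % D.r = (p' + (k + c)) % D.r := by
    have hre : (D.r : ℕ) = L := rfl
    have : p' + (k + c) = (p + k) + p' * L := by rw [hc, hL0]; ring
    rw [hre, this, Nat.add_mul_mod_self_right]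
  rw [U_mk_congr D _ (Nat.mod_lt _ D.r_pos) hmid] at key1
  rw [key2] at key1
  rwa [U_mk_congr ℳ' _ (Nat.mod_lt _ ℳ'.r_pos)
    (show (q' + (k + c)) % ℳ'.r = (q' + c + k) % ℳ'.r by ring_nf)] at key1


/-- Minimal domains whose open sets intersect coincide up to cyclic
shift (in particular they have the same period and the same union); consequently,
minimal domains that do not coincide up to cyclic shift have disjoint unions. -/
theorem statement9
    (n : ℕ) (hn : 1 ≤ n) (a : EuclideanSpace ℝ (Fin n)) (ε : ℝ) (hε : 0 < ε)
    (a₀ : PSpace n a ε) (ha₀ : (a₀ : EuclideanSpace ℝ (Fin n)) = a)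
    (ν : Measure (PSpace n a ε))
    (hν : ν = (volume (Metric.closedBall a ε))⁻¹ •
      ((volume : Measure (EuclideanSpace ℝ (Fin n))).comap Subtype.val))
    (νinf : Measure (ℕ → PSpace n a ε)) (hprobν : IsProbabilityMeasure νinf)
    (hνinf : ∀ k : ℕ, νinf.map (fun t (i : Fin k) => t i) = Measure.pi fun _ => ν)
    (M : Type*) [MetricSpace M] [CompactSpace M] [MeasurableSpace M] [BorelSpace M]
    (m : Measure M) (hmprob : IsProbabilityMeasure m)
    (hmpos : ∀ O : Set M, IsOpen O → O.Nonempty → 0 < m O)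
    (f : M → PSpace n a ε → M)
    (hfc : Continuous fun p : M × PSpace n a ε => f p.1 p.2)
    (hfh : ∀ t : PSpace n a ε, IsHomeomorph fun z : M => f z t)
    (hfnull : ∀ (t : PSpace n a ε) (A : Set M), m A = 0 →
      m ((fun z => f z t) '' A) = 0 ∧ m ((fun z => f z t) ⁻¹' A) = 0)
    (ℳ ℳ' : SInvDomain f) (hmin : MinimalDom ℳ) (hmin' : MinimalDom ℳ')
    (hmeet : ∃ (i : Fin ℳ.r) (j : Fin ℳ'.r), (ℳ.U i ∩ ℳ'.U j).Nonempty) :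
    (CyclicEq ℳ ℳ' ∧ ℳ.r = ℳ'.r ∧ ℳ.carrier = ℳ'.carrier) ∧
    ∀ N N' : SInvDomain f, MinimalDom N → MinimalDom N' → ¬ CyclicEq N N' →
      Disjoint N.carrier N'.carrier := by
  have hce : CyclicEq ℳ ℳ' := key a₀ ℳ ℳ' hmin hmin' hmeet
  refine ⟨⟨hce, cyclicEq_r hce, carrier_eq hce⟩, ?_⟩
  intro N N' hN hN' hne
  rw [Set.disjoint_left]
  intro x hx hx'
  rw [SInvDomain.carrier, mem_iUnion] at hx hx'
  obtain ⟨i, hi⟩ := hx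
  obtain ⟨j, hj⟩ := hx'
  exact hne (key a₀ N N' hN hN' ⟨i, j, x, hi, hj⟩)


end
end
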